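/- Let u be a reduced eigenfunction for (c, μ, λ), where (α,β) ⊆ (0,H) is a well for c with threshold c₁ and ξ² := 2(μ² − λ/c₁) > 0. Put w = u². Let [a,b] ⊆ [0,H] be an interval with either a > β or b < α, let d be the distance between the intervals (α,β) and (a,b), and let t ∈ (0,1). If a > β then w(t a + (1−t) β) ≥ (1/2) ξ² (1−t) d ∫_a^b w(y) dy; if b < α then w(t b + (1−t) α) ≥ (1/2) ξ² (1−t) d ∫_a^b w(y) dy. -/

import Mathlib

open Set MeasureTheory Filter

open Topology intervalIntegral Asymptotics

lemma ibp_aux (p q M : ℝ) (u u' h : ℝ → ℝ) (hpq : p ≤ q)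
    (hu : ∀ y ∈ Icc p q, HasDerivWithinAt u (u' y) (Icc p q) y)
    (hu'cont : ContinuousOn u' (Icc p q))
    (hh : IntervalIntegrable h volume p q)
    (hM : ∀ t ∈ Icc p q, |h t| ≤ M) :
    ∫ r in p..q, u' r * (∫ t in p..r, h t)
      = u q * (∫ t in p..q, h t) - ∫ t in p..q, u t * h t := by
  have hucont : ContinuousOn u (Icc p q) := fun y hy => (hu y hy).continuousWithinAt
  set F : ℝ → ℝ := fun r => ∫ t in p..r, h t with hF
  set Q : ℝ → ℝ := fun r => ∫ t in p..r, u t * h t with hQ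
  have huIcc : uIcc p q = Icc p q := uIcc_of_le hpq
  have hhsub : ∀ r₁ r₂, r₁ ∈ Icc p q → r₂ ∈ Icc p q → IntervalIntegrable h volume r₁ r₂ := by
    intro r₁ r₂ h1 h2
    exact hh.mono_set (by rw [huIcc]; exact uIcc_subset_Icc h1 h2)
  have huh : IntervalIntegrable (fun t => u t * h t) volume p q :=
    hh.continuousOn_mul (huIcc ▸ hucont)
  have huhsub : ∀ r₁ r₂, r₁ ∈ Icc p q → r₂ ∈ Icc p q →
      IntervalIntegrable (fun t => u t * h t) volume r₁ r₂ := by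
    intro r₁ r₂ h1 h2
    exact huh.mono_set (by rw [huIcc]; exact uIcc_subset_Icc h1 h2)
  have hFcont : ContinuousOn F (Icc p q) := by
    rw [← huIcc]
    exact continuousOn_primitive_interval
      (huIcc ▸ (intervalIntegrable_iff_integrableOn_Icc_of_le hpq).mp hh)
  have hQcont : ContinuousOn Q (Icc p q) := by
    rw [← huIcc]
    exact continuousOn_primitive_interval
      (huIcc ▸ (intervalIntegrable_iff_integrableOn_Icc_of_le hpq).mp huh)
  -- the function D
  set D : ℝ → ℝ := fun r => u r * F r - Q r with hD
  have hDcont : ContinuousOn D (Icc p q) := (hucont.mul hFcont).sub hQcont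
  have hderiv : ∀ r ∈ Ioo p q, HasDerivAt D (u' r * F r) r := by
    intro r hr
    have hrmem : r ∈ Icc p q := Ioo_subset_Icc_self hr
    have hnhds : Icc p q ∈ 𝓝 r := Icc_mem_nhds hr.1 hr.2
    have hur : HasDerivAt u (u' r) r := (hu r hrmem).hasDerivAt hnhds
    have hucr : ContinuousAt u r := hur.continuousAt
    have hFcr : ContinuousAt F r := (hFcont r hrmem).continuousAt hnhds
    rw [hasDerivAt_iff_isLittleO]
    have hev : ∀ᶠ y in 𝓝 r, y ∈ Icc p q := hnhds
    -- decomposition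
    have hdecomp : ∀ᶠ y in 𝓝 r,
        D y - D r - (y - r) • (u' r * F r)
          = (u y - u r - (y - r) * u' r) * F y
            + ((y - r) * u' r) * (F y - F r)
            + (∫ t in r..y, (u r - u t) * h t) := by
      filter_upwards [hev] with y hy
      have h1 : F y - F r = ∫ t in r..y, h t := by
        simpa using integral_interval_sub_left (hhsub p y (left_mem_Icc.mpr hpq) hy)
          (hhsub p r (left_mem_Icc.mpr hpq) hrmem)
      have h2 : Q y - Q r = ∫ t in r..y, u t * h t := by
        simpa using integral_interval_sub_left (huhsub p y (left_mem_Icc.mpr hpq) hy)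
          (huhsub p r (left_mem_Icc.mpr hpq) hrmem)
      have h3 : (∫ t in r..y, (u r - u t) * h t)
          = u r * (F y - F r) - (Q y - Q r) := by
        rw [h1, h2, ← intervalIntegral.integral_const_mul,
          ← intervalIntegral.integral_sub ((hhsub r y hrmem hy).const_mul _)
            (huhsub r y hrmem hy)]
        congr 1; ext t; ring
      rw [h3]
      simp only [hD, smul_eq_mul]
      ring
    rw [Asymptotics.isLittleO_congr hdecomp (Eventually.of_forall fun _ => rfl)]
    have tA : (fun y => (u y - u r - (y - r) * u' r) * F y)
        =o[𝓝 r] fun y => y - r := by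
      have h1 : (fun y => u y - u r - (y - r) * u' r) =o[𝓝 r] fun y => y - r := by
        simpa [smul_eq_mul] using (hasDerivAt_iff_isLittleO.1 hur)
      have h2 : (fun y => F y) =O[𝓝 r] (fun _ => (1:ℝ)) :=
        hFcr.isBigO_one ℝ
      simpa using h1.mul_isBigO h2
    have tB : (fun y => ((y - r) * u' r) * (F y - F r)) =o[𝓝 r] fun y => y - r := by
      have h1 : (fun y => (y - r) * u' r) =O[𝓝 r] fun y => y - r := by
        simpa using (Asymptotics.isBigO_refl (fun y => y - r) (𝓝 r)).mul
          (Asymptotics.isBigO_const_const (u' r) one_ne_zero (𝓝 r))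
      have h2 : (fun y => F y - F r) =o[𝓝 r] (fun _ => (1:ℝ)) := by
        rw [Asymptotics.isLittleO_one_iff]
        simpa using hFcr.tendsto.sub_const (F r)
      simpa using h1.mul_isLittleO h2
    have tC : (fun y => ∫ t in r..y, (u r - u t) * h t) =o[𝓝 r] fun y => y - r := by
      rw [Asymptotics.isLittleO_iff]
      intro ε hε
      have hM0 : 0 ≤ M := le_trans (abs_nonneg _) (hM p ((left_mem_Icc.mpr hpq)))
      have hεM : 0 < ε / (M + 1) := div_pos hε (by linarith)
      have hcont := Metric.continuousAt_iff.1 hucr (ε / (M+1)) hεM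
      obtain ⟨δ, hδ, hδ'⟩ := hcont
      have hball : ∀ᶠ y in 𝓝 r, y ∈ Metric.ball r δ := Metric.ball_mem_nhds r hδ
      filter_upwards [hev, hball] with y hy hyb
      have hsub2 : Set.uIoc r y ⊆ Icc p q :=
        uIoc_subset_uIcc.trans (huIcc ▸ uIcc_subset_uIcc (huIcc ▸ hrmem) (huIcc ▸ hy))
      have key : ∀ t ∈ Set.uIoc r y, ‖(u r - u t) * h t‖ ≤ (ε/(M+1))*M := by
        intro t ht
        have htr : dist t r < δ := by
          have h1 : |t - r| ≤ |y - r| := by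
            rcases le_total r y with hle | hle
            · rw [uIoc_of_le hle] at ht
              rw [abs_of_nonneg (by linarith [ht.1.le] : (0:ℝ) ≤ t - r),
                abs_of_nonneg (by linarith : (0:ℝ) ≤ y - r)]
              linarith [ht.2]
            · rw [uIoc_of_ge hle] at ht
              rw [abs_of_nonpos (by linarith [ht.2] : t - r ≤ 0),
                abs_of_nonpos (by linarith : y - r ≤ 0)]
              linarith [ht.1]
          calc dist t r = |t - r| := Real.dist_eq t r
            _ ≤ |y - r| := h1
            _ < δ := by rw [← Real.dist_eq]; exact hyb
        have h2 : |u r - u t| ≤ ε/(M+1) := by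
          have h4 := hδ' htr
          rw [Real.dist_eq] at h4
          rw [abs_sub_comm]
          linarith [h4]
        have h3 : |h t| ≤ M := hM t (hsub2 ht)
        rw [Real.norm_eq_abs, abs_mul]
        exact mul_le_mul h2 h3 (abs_nonneg _) (le_of_lt hεM)
      calc ‖∫ t in r..y, (u r - u t) * h t‖
          ≤ (ε/(M+1))*M * |y - r| := intervalIntegral.norm_integral_le_of_norm_le_const key
        _ ≤ ε * ‖y - r‖ := by
            rw [Real.norm_eq_abs]
            have hle : (ε/(M+1))*M ≤ ε := by
              rw [div_mul_eq_mul_div, div_le_iff₀ (by linarith)]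
              nlinarith
            exact mul_le_mul_of_nonneg_right hle (abs_nonneg _)
    exact (tA.add tB).add tC
  have hint : IntervalIntegrable (fun r => u' r * F r) volume p q :=
    ((hu'cont.mul hFcont).mono (by rw [huIcc])).intervalIntegrable
  have := integral_eq_sub_of_hasDeriv_right_of_le hpq hDcont
    (fun r hr => (hderiv r hr).hasDerivWithinAt) hint
  rw [this]
  simp only [hD, hF, hQ]
  simp [intervalIntegral.integral_same]

lemma key_identity (H lam μ M : ℝ) (c u u' : ℝ → ℝ)
    (hu : ∀ y ∈ Icc (0:ℝ) H, HasDerivWithinAt u (u' y) (Icc (0:ℝ) H) y)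
    (hu'c : ContinuousOn u' (Icc (0:ℝ) H))
    (hode : ∀ y ∈ Icc (0:ℝ) H, u' y = u' 0 - ∫ t in (0:ℝ)..y, (lam / c t - μ ^ 2) * u t)
    (hhint : IntervalIntegrable (fun t => (lam / c t - μ ^ 2) * u t) volume 0 H)
    (hM : ∀ t ∈ Icc (0:ℝ) H, |(lam / c t - μ ^ 2) * u t| ≤ M)
    (p q : ℝ) (hp : 0 ≤ p) (hpq : p ≤ q) (hq : q ≤ H) :
    u q * u' q - u p * u' p
      = (∫ r in p..q, (u' r)^2) - ∫ t in p..q, ((lam / c t - μ ^ 2) * u t) * u t := by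
  set h : ℝ → ℝ := fun t => (lam / c t - μ ^ 2) * u t with hh
  have hIcc : Icc p q ⊆ Icc (0:ℝ) H := Icc_subset_Icc hp hq
  have huIccH : uIcc (0:ℝ) H = Icc 0 H := uIcc_of_le (hp.trans (hpq.trans hq))
  have hsubH : ∀ r₁ r₂, r₁ ∈ Icc (0:ℝ) H → r₂ ∈ Icc (0:ℝ) H →
      IntervalIntegrable h volume r₁ r₂ := fun r₁ r₂ h1 h2 =>
    hhint.mono_set (by rw [huIccH]; exact uIcc_subset_Icc h1 h2)
  have hpmem : p ∈ Icc (0:ℝ) H := ⟨hp, hpq.trans hq⟩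
  have hqmem : q ∈ Icc (0:ℝ) H := ⟨hp.trans hpq, hq⟩
  -- F p r = u' p - u' r
  have hF : ∀ r ∈ Icc (0:ℝ) H, (∫ t in p..r, h t) = u' p - u' r := by
    intro r hr
    have h1 := integral_interval_sub_left (hsubH 0 r (left_mem_Icc.mpr (hp.trans (hpq.trans hq))) hr)
      (hsubH 0 p (left_mem_Icc.mpr (hp.trans (hpq.trans hq))) hpmem)
    rw [← h1, hode r hr, hode p hpmem]
    ring
  have hibp := ibp_aux p q M u u' h hpq
    (fun y hy => (hu y (hIcc hy)).mono hIcc)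
    (hu'c.mono hIcc)
    (hsubH p q hpmem hqmem)
    (fun t ht => hM t (hIcc ht))
  -- rewrite LHS of hibp
  have hL : (∫ r in p..q, u' r * (∫ t in p..r, h t))
      = ∫ r in p..q, u' r * (u' p - u' r) := by
    apply intervalIntegral.integral_congr
    intro r hr
    rw [uIcc_of_le hpq] at hr
    beta_reduce
    rw [hF r (hIcc hr)]
  have hu'int : IntervalIntegrable u' volume p q :=
    ((hu'c.mono hIcc).mono (by rw [uIcc_of_le hpq])).intervalIntegrable
  have hu'sqint : IntervalIntegrable (fun r => u' r * u' r) volume p q :=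
    ((((hu'c.mono hIcc).mul (hu'c.mono hIcc))).mono (by rw [uIcc_of_le hpq])).intervalIntegrable
  have hL2 : (∫ r in p..q, u' r * (u' p - u' r))
      = u' p * (∫ r in p..q, u' r) - ∫ r in p..q, u' r * u' r := by
    rw [← intervalIntegral.integral_const_mul,
      ← intervalIntegral.integral_sub (hu'int.const_mul _) hu'sqint]
    apply intervalIntegral.integral_congr
    intro r _; beta_reduce; ring
  have hftc : (∫ r in p..q, u' r) = u q - u p := by
    apply integral_eq_sub_of_hasDeriv_right_of_le hpq
      (fun y hy => ((hu y (hIcc hy)).mono hIcc).continuousWithinAt)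
      (fun s hs => ?_) hu'int
    have hnhds : Icc (0:ℝ) H ∈ 𝓝 s :=
      Icc_mem_nhds (lt_of_le_of_lt hp hs.1) (lt_of_lt_of_le hs.2 hq)
    exact ((hu s (hIcc (Ioo_subset_Icc_self hs))).hasDerivAt hnhds).hasDerivWithinAt
  have hsq : (∫ r in p..q, (u' r)^2) = ∫ r in p..q, u' r * u' r := by
    apply intervalIntegral.integral_congr; intro r _; ring
  rw [hL, hL2, hftc, hF q hqmem] at hibp
  rw [hsq]
  have huh : (∫ t in p..q, h t * u t) = ∫ t in p..q, u t * h t := by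
    apply intervalIntegral.integral_congr; intro r _; ring
  rw [show (∫ t in p..q, (lam / c t - μ ^ 2) * u t * u t) = ∫ t in p..q, h t * u t from rfl, huh]
  linarith [hibp]

/-- `u` (with derivative `u'`) is a reduced eigenfunction for `(c, μ, lam)` on `[0,H]`. -/
def ReducedEigenfunction (H : ℝ) (c : ℝ → ℝ) (μ lam : ℝ) (u u' : ℝ → ℝ) : Prop :=
  (∀ y ∈ Set.Icc (0:ℝ) H, HasDerivWithinAt u (u' y) (Set.Icc (0:ℝ) H) y) ∧
  ContinuousOn u' (Set.Icc (0:ℝ) H) ∧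
  (∀ y ∈ Set.Icc (0:ℝ) H, u' y = u' 0 - ∫ t in (0:ℝ)..y, (lam / c t - μ ^ 2) * u t) ∧
  (∃ y ∈ Set.Icc (0:ℝ) H, u y ≠ 0) ∧
  u 0 = 0 ∧ u H = 0

set_option maxHeartbeats 2000000 in
theorem stmt1
    (H c_m c_M c₁ α β μ lam a b : ℝ) (c u u' : ℝ → ℝ)
    (hH : 0 < H) (hcm : 0 < c_m) (hcmM : c_m ≤ c_M)
    (hmeas : Measurable c)
    (hbounds : ∀ y ∈ Set.Icc (0:ℝ) H, c_m ≤ c y ∧ c y ≤ c_M)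
    (hc₁m : c_m < c₁) (hc₁M : c₁ ≤ c_M)
    (hα : 0 ≤ α) (hαβ : α < β) (hβ : β ≤ H)
    (hwell : ∀ᵐ y ∂(MeasureTheory.volume.restrict (Set.Ioo (0:ℝ) H \ Set.Ioo α β)),
      c₁ ≤ c y)
    (hμ : 0 < μ) (hlam : 0 < lam)
    (hξ : 0 < 2 * (μ ^ 2 - lam / c₁))
    (ha : 0 ≤ a) (hab : a ≤ b) (hb : b ≤ H)
    (hu : ReducedEigenfunction H c μ lam u u') :
    ∀ t ∈ Set.Ioo (0:ℝ) 1,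
      (β < a →
        (1 / 2) * (2 * (μ ^ 2 - lam / c₁)) * (1 - t) * (a - β) * (∫ y in a..b, (u y) ^ 2)
          ≤ (u (t * a + (1 - t) * β)) ^ 2) ∧
      (b < α →
        (1 / 2) * (2 * (μ ^ 2 - lam / c₁)) * (1 - t) * (α - b) * (∫ y in a..b, (u y) ^ 2)
          ≤ (u (t * b + (1 - t) * α)) ^ 2) := by
  obtain ⟨hud, hu'c, hode, -, hu0, huH⟩ := hu
  have hc₁pos : 0 < c₁ := hcm.trans hc₁m
  have hξ2 : 0 < μ ^ 2 - lam / c₁ := by linarith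
  have hβ0 : 0 < β := lt_of_le_of_lt hα hαβ
  have hucont : ContinuousOn u (Icc 0 H) := fun y hy => (hud y hy).continuousWithinAt
  obtain ⟨Cu, hCu⟩ := isCompact_Icc.exists_bound_of_continuousOn hucont
  set M : ℝ := (lam / c_m + μ ^ 2) * Cu with hMdef
  have hM : ∀ t ∈ Icc (0:ℝ) H, |(lam / c t - μ ^ 2) * u t| ≤ M := by
    intro s hs
    have hct := hbounds s hs
    have h1 : (0:ℝ) < c s := lt_of_lt_of_le hcm hct.1
    have h2 : lam / c s ≤ lam / c_m := div_le_div_of_nonneg_left hlam.le hcm hct.1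
    have h3 : 0 < lam / c s := div_pos hlam h1
    have h4 : |lam / c s - μ ^ 2| ≤ lam / c_m + μ ^ 2 := by
      rw [abs_le]
      constructor <;> nlinarith [sq_nonneg μ]
    have h5 : |u s| ≤ Cu := by rw [← Real.norm_eq_abs]; exact hCu s hs
    rw [abs_mul]
    exact mul_le_mul h4 h5 (abs_nonneg _) (by positivity)
  have hhint : IntervalIntegrable (fun t => (lam / c t - μ ^ 2) * u t) volume 0 H := by
    rw [intervalIntegrable_iff_integrableOn_Icc_of_le hH.le]
    have hmeasS : AEStronglyMeasurable (fun t => (lam / c t - μ ^ 2) * u t)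
        (volume.restrict (Icc 0 H)) := by
      apply AEMeasurable.aestronglyMeasurable
      exact (((measurable_const.div hmeas).sub measurable_const).aemeasurable).mul
        (hucont.aemeasurable measurableSet_Icc)
    refine Integrable.mono' (integrable_const M) hmeasS ?_
    filter_upwards [ae_restrict_mem measurableSet_Icc] with s hs
    rw [Real.norm_eq_abs]
    exact hM s hs
  have KEY := key_identity H lam μ M c u u' hud hu'c hode hhint hM
  have hK0 : 0 ≤ ∫ y in a..b, u y ^ 2 :=
    intervalIntegral.integral_nonneg hab fun y _ => sq_nonneg _
  have contInt : ∀ (f : ℝ → ℝ), ContinuousOn f (Icc 0 H) → ∀ p q, 0 ≤ p → p ≤ q → q ≤ H →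
      IntervalIntegrable f volume p q := fun f hf p q hp hpq hq =>
    ((hf.mono (Icc_subset_Icc hp hq)).mono (by rw [uIcc_of_le hpq])).intervalIntegrable
  have huhint : IntervalIntegrable (fun t => ((lam / c t - μ ^ 2) * u t) * u t) volume 0 H :=
    hhint.mul_continuousOn (by rw [uIcc_of_le hH.le]; exact hucont)
  have huhsub : ∀ p q, 0 ≤ p → p ≤ q → q ≤ H →
      IntervalIntegrable (fun t => ((lam / c t - μ ^ 2) * u t) * u t) volume p q :=
    fun p q hp hpq hq => huhint.mono_set
      (by rw [uIcc_of_le hH.le]; exact uIcc_subset_Icc ⟨hp, hpq.trans hq⟩ ⟨hp.trans hpq, hq⟩)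
  have hu2cont : ContinuousOn (fun y => u y ^ 2) (Icc 0 H) := hucont.pow 2
  have h2uu'cont : ContinuousOn (fun s => 2 * u s * u' s) (Icc 0 H) :=
    (continuousOn_const.mul hucont).mul hu'c
  have hwell' : ∀ᵐ y ∂volume, y ∈ (Ioo (0:ℝ) H \ Ioo α β) → c₁ ≤ c y :=
    (ae_restrict_iff' (measurableSet_Ioo.diff measurableSet_Ioo)).mp hwell
  -- generic one-sided estimate
  have ENDS : ∀ s p q : ℝ, 0 ≤ s → s ≤ H → 0 ≤ p → p ≤ q → q ≤ H →
      (Ioo s H ∩ Ioo α β = ∅ ∨ Ioo 0 s ∩ Ioo α β = ∅) → True := fun _ _ _ _ _ _ _ _ _ => trivial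
  intro t ht
  have ht0 : 0 < t := ht.1
  have ht1 : t < 1 := ht.2
  constructor
  · -- case β < a
    intro hβa
    set x : ℝ := t * a + (1 - t) * β with hxdef
    have hxβ : β < x := by nlinarith
    have hxa : x < a := by nlinarith
    have hx0 : 0 < x := hβ0.trans hxβ
    have hxb : x ≤ b := hxa.le.trans hab
    have hxH : x ≤ H := hxb.trans hb
    -- pointwise derivative bound
    have mainA : ∀ s, x ≤ s → s ≤ b →
        (μ ^ 2 - lam / c₁) * (∫ y in s..H, u y ^ 2) ≤ -(u s * u' s) := by
      intro s hxs hsb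
      have hs0 : (0:ℝ) ≤ s := hx0.le.trans hxs
      have hsH : s ≤ H := hsb.trans hb
      have hid := KEY s H hs0 hsH le_rfl
      rw [huH, zero_mul, zero_sub] at hid
      have hnn : 0 ≤ ∫ r in s..H, (u' r) ^ 2 :=
        intervalIntegral.integral_nonneg hsH fun _ _ => sq_nonneg _
      have hae : ∀ᵐ y ∂volume.restrict (Icc s H),
          ((lam / c y - μ ^ 2) * u y) * u y ≤ -(μ ^ 2 - lam / c₁) * u y ^ 2 := by
        have h0 : ∀ᵐ y ∂volume, y ∉ ({s, H} : Set ℝ) :=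
          measure_eq_zero_iff_ae_notMem.mp ((Set.toFinite _).measure_zero _)
        filter_upwards [ae_restrict_of_ae hwell', ae_restrict_mem measurableSet_Icc,
          ae_restrict_of_ae h0] with y h1 h2 h3
        have hys : s < y := lt_of_le_of_ne h2.1 (by simp at h3; exact fun e => (h3.1 e.symm).elim)
        have hyH : y < H := lt_of_le_of_ne h2.2 (by simp at h3; exact h3.2)
        have hyS : y ∈ Ioo (0:ℝ) H \ Ioo α β := by
          refine ⟨⟨hx0.trans (lt_of_le_of_lt hxs hys), hyH⟩, ?_⟩
          intro hy'
          exact absurd hy'.2 (not_lt.mpr (le_trans hxβ.le (le_trans hxs hys.le)))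
        have hc := h1 hyS
        have hcy : 0 < c y := hc₁pos.trans_le hc
        have hdiv : lam / c y ≤ lam / c₁ := div_le_div_of_nonneg_left hlam.le hc₁pos hc
        nlinarith [sq_nonneg (u y)]
      have int2 : IntervalIntegrable (fun y => -(μ ^ 2 - lam / c₁) * u y ^ 2) volume s H :=
        contInt _ (continuousOn_const.mul hu2cont) s H hs0 hsH le_rfl
      have hmono := intervalIntegral.integral_mono_ae_restrict hsH
        (huhsub s H hs0 hsH le_rfl) int2 hae
      rw [intervalIntegral.integral_const_mul] at hmono
      linarith
    have hsplit : ∀ s, x ≤ s → s ≤ a →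
        (∫ y in a..b, u y ^ 2) ≤ ∫ y in s..H, u y ^ 2 := by
      intro s hxs hsa
      have hs0 : (0:ℝ) ≤ s := hx0.le.trans hxs
      have i1 := contInt _ hu2cont s a hs0 hsa (hab.trans hb)
      have i2 := contInt _ hu2cont a b ha hab hb
      have i3 := contInt _ hu2cont b H (ha.trans hab) hb le_rfl
      have i4 := contInt _ hu2cont a H ha (hab.trans hb) le_rfl
      have e1 := intervalIntegral.integral_add_adjacent_intervals i2 i3
      have e2 := intervalIntegral.integral_add_adjacent_intervals i1 i4
      have n1 : 0 ≤ ∫ y in s..a, u y ^ 2 :=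
        intervalIntegral.integral_nonneg hsa fun _ _ => sq_nonneg _
      have n2 : 0 ≤ ∫ y in b..H, u y ^ 2 :=
        intervalIntegral.integral_nonneg hb fun _ _ => sq_nonneg _
      linarith
    -- FTC for u^2 on [x,b]
    have hftcw : ∫ s in x..b, 2 * u s * u' s = u b ^ 2 - u x ^ 2 := by
      apply integral_eq_sub_of_hasDeriv_right_of_le hxb
        ((hucont.mono (Icc_subset_Icc hx0.le hb)).pow 2)
        (fun s hs => ?_)
        (contInt _ h2uu'cont x b hx0.le hxb hb)
      have hsmem : s ∈ Icc (0:ℝ) H := ⟨(hx0.trans hs.1).le, (hs.2.trans_le hb).le⟩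
      have hnhds : Icc (0:ℝ) H ∈ 𝓝 s := Icc_mem_nhds (hx0.trans hs.1) (hs.2.trans_le hb)
      have hder := ((hud s hsmem).hasDerivAt hnhds).pow 2
      norm_num at hder
      exact hder.hasDerivWithinAt
    have i5 := contInt _ h2uu'cont x a hx0.le hxa.le (hab.trans hb)
    have i6 := contInt _ h2uu'cont a b ha hab hb
    have e3 := intervalIntegral.integral_add_adjacent_intervals i5 i6
    have hbnd1 : ∫ s in x..a, 2 * u s * u' s
        ≤ ∫ s in x..a, (-(2 * (μ ^ 2 - lam / c₁) * ∫ y in a..b, u y ^ 2)) := by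
      apply intervalIntegral.integral_mono_on hxa.le i5 intervalIntegrable_const
      intro s hs
      have h1 := mainA s hs.1 (hs.2.trans hab)
      have h2 := hsplit s hs.1 hs.2
      nlinarith
    have hbnd2 : ∫ s in a..b, 2 * u s * u' s ≤ 0 := by
      have : ∫ s in a..b, 2 * u s * u' s ≤ ∫ s in a..b, (0:ℝ) := by
        apply intervalIntegral.integral_mono_on hab i6 intervalIntegrable_const
        intro s hs
        have h1 := mainA s ((hxa.le.trans hs.1)) hs.2
        have h2 : 0 ≤ ∫ y in s..H, u y ^ 2 :=
          intervalIntegral.integral_nonneg (hs.2.trans hb) fun _ _ => sq_nonneg _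
        nlinarith
      simpa using this
    rw [intervalIntegral.integral_const, smul_eq_mul] at hbnd1
    have hxval : a - x = (1 - t) * (a - β) := by rw [hxdef]; ring
    have hprod : 0 ≤ (μ ^ 2 - lam / c₁) * ((1 - t) * ((a - β) * (∫ y in a..b, u y ^ 2))) := by
      apply mul_nonneg hξ2.le
      apply mul_nonneg (by linarith)
      exact mul_nonneg (by linarith) hK0
    nlinarith [sq_nonneg (u b), hftcw, e3, hbnd1, hbnd2]
  · -- case b < α
    intro hbα
    set x : ℝ := t * b + (1 - t) * α with hxdef
    have hxb : b < x := by nlinarith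
    have hxα : x < α := by nlinarith
    have hxH : x ≤ H := (hxα.trans (hαβ.trans_le hβ)).le
    have hax : a ≤ x := hab.trans hxb.le
    have hx0 : 0 ≤ x := ha.trans hax
    -- pointwise derivative bound
    have mainA : ∀ s, a ≤ s → s ≤ x →
        (μ ^ 2 - lam / c₁) * (∫ y in (0:ℝ)..s, u y ^ 2) ≤ u s * u' s := by
      intro s has hsx
      have hs0 : (0:ℝ) ≤ s := ha.trans has
      have hsH : s ≤ H := hsx.trans hxH
      have hid := KEY 0 s le_rfl hs0 hsH
      rw [hu0, zero_mul, sub_zero] at hid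
      have hnn : 0 ≤ ∫ r in (0:ℝ)..s, (u' r) ^ 2 :=
        intervalIntegral.integral_nonneg hs0 fun _ _ => sq_nonneg _
      have hae : ∀ᵐ y ∂volume.restrict (Icc (0:ℝ) s),
          ((lam / c y - μ ^ 2) * u y) * u y ≤ -(μ ^ 2 - lam / c₁) * u y ^ 2 := by
        have h0 : ∀ᵐ y ∂volume, y ∉ ({0, s} : Set ℝ) :=
          measure_eq_zero_iff_ae_notMem.mp ((Set.toFinite _).measure_zero _)
        filter_upwards [ae_restrict_of_ae hwell', ae_restrict_mem measurableSet_Icc,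
          ae_restrict_of_ae h0] with y h1 h2 h3
        have hy0 : 0 < y := lt_of_le_of_ne h2.1 (by simp at h3; exact fun e => (h3.1 e.symm).elim)
        have hys : y < s := lt_of_le_of_ne h2.2 (by simp at h3; exact h3.2)
        have hyS : y ∈ Ioo (0:ℝ) H \ Ioo α β := by
          refine ⟨⟨hy0, lt_of_lt_of_le (hys.trans_le hsH) le_rfl⟩, ?_⟩
          intro hy'
          exact absurd hy'.1 (not_lt.mpr ((hys.trans_le hsx).trans hxα).le)
        have hc := h1 hyS
        have hcy : 0 < c y := hc₁pos.trans_le hc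
        have hdiv : lam / c y ≤ lam / c₁ := div_le_div_of_nonneg_left hlam.le hc₁pos hc
        nlinarith [sq_nonneg (u y)]
      have int2 : IntervalIntegrable (fun y => -(μ ^ 2 - lam / c₁) * u y ^ 2) volume 0 s :=
        contInt _ (continuousOn_const.mul hu2cont) 0 s le_rfl hs0 hsH
      have hmono := intervalIntegral.integral_mono_ae_restrict hs0
        (huhsub 0 s le_rfl hs0 hsH) int2 hae
      rw [intervalIntegral.integral_const_mul] at hmono
      linarith
    have hsplit : ∀ s, b ≤ s → s ≤ x →
        (∫ y in a..b, u y ^ 2) ≤ ∫ y in (0:ℝ)..s, u y ^ 2 := by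
      intro s hbs hsx
      have hsH : s ≤ H := hsx.trans hxH
      have i1 := contInt _ hu2cont 0 a le_rfl ha (hab.trans hb)
      have i2 := contInt _ hu2cont a b ha hab hb
      have i3 := contInt _ hu2cont b s (ha.trans hab) hbs hsH
      have i4 := contInt _ hu2cont a s ha (hab.trans hbs) hsH
      have e1 := intervalIntegral.integral_add_adjacent_intervals i2 i3
      have e2 := intervalIntegral.integral_add_adjacent_intervals i1 i4
      have n1 : 0 ≤ ∫ y in (0:ℝ)..a, u y ^ 2 :=
        intervalIntegral.integral_nonneg ha fun _ _ => sq_nonneg _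
      have n2 : 0 ≤ ∫ y in b..s, u y ^ 2 :=
        intervalIntegral.integral_nonneg hbs fun _ _ => sq_nonneg _
      linarith
    -- FTC for u^2 on [a,x]
    have hftcw : ∫ s in a..x, 2 * u s * u' s = u x ^ 2 - u a ^ 2 := by
      apply integral_eq_sub_of_hasDeriv_right_of_le hax
        ((hucont.mono (Icc_subset_Icc ha hxH)).pow 2)
        (fun s hs => ?_)
        (contInt _ h2uu'cont a x ha hax hxH)
      have hsmem : s ∈ Icc (0:ℝ) H := ⟨(ha.trans hs.1.le), (hs.2.le.trans hxH)⟩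
      have hnhds : Icc (0:ℝ) H ∈ 𝓝 s :=
        Icc_mem_nhds (lt_of_le_of_lt ha hs.1) (lt_of_lt_of_le hs.2 hxH)
      have hder := ((hud s hsmem).hasDerivAt hnhds).pow 2
      norm_num at hder
      exact hder.hasDerivWithinAt
    have i5 := contInt _ h2uu'cont a b ha hab hb
    have i6 := contInt _ h2uu'cont b x (ha.trans hab) hxb.le hxH
    have e3 := intervalIntegral.integral_add_adjacent_intervals i5 i6
    have hbnd1 : ∫ s in b..x, (2 * (μ ^ 2 - lam / c₁) * ∫ y in a..b, u y ^ 2)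
        ≤ ∫ s in b..x, 2 * u s * u' s := by
      apply intervalIntegral.integral_mono_on hxb.le intervalIntegrable_const i6
      intro s hs
      have h1 := mainA s (hab.trans hs.1) hs.2
      have h2 := hsplit s hs.1 hs.2
      nlinarith
    have hbnd2 : 0 ≤ ∫ s in a..b, 2 * u s * u' s := by
      have : ∫ s in a..b, (0:ℝ) ≤ ∫ s in a..b, 2 * u s * u' s := by
        apply intervalIntegral.integral_mono_on hab intervalIntegrable_const i5
        intro s hs
        have h1 := mainA s hs.1 (hs.2.trans hxb.le)
        have h2 : 0 ≤ ∫ y in (0:ℝ)..s, u y ^ 2 :=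
          intervalIntegral.integral_nonneg (ha.trans hs.1) fun _ _ => sq_nonneg _
        nlinarith
      simpa using this
    rw [intervalIntegral.integral_const, smul_eq_mul] at hbnd1
    have hxval : x - b = (1 - t) * (α - b) := by rw [hxdef]; ring
    have hprod : 0 ≤ (μ ^ 2 - lam / c₁) * ((1 - t) * ((α - b) * (∫ y in a..b, u y ^ 2))) := by
      apply mul_nonneg hξ2.le
      apply mul_nonneg (by linarith)
      exact mul_nonneg (by linarith) hK0
    nlinarith [sq_nonneg (u a), hftcw, e3, hbnd1, hbnd2]
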